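/- Let K = Matrix.fromBlocks 0 B C D, where the upper-left block is the n×n zero matrix, D : Matrix (Fin m) (Fin m) ℂ is normal (IsStarNormal), B : Matrix (Fin n) (Fin m) ℂ and C : Matrix (Fin m) (Fin n) ℂ, with n, m ≥ 1. Let ρ(D) := the maximum of |μ| over eigenvalues μ ∈ spectrum ℂ D. Then every eigenvalue λ ∈ spectrum ℂ K satisfies |λ| ≤ ρ(D) + Real.sqrt (‖B‖ · ‖C‖), where ‖·‖ is the ℓ²-operator norm. (This is the spectral-radius bound of the paper's Appendix D, stated with the hypotheses — zero upper-left block and normal D — under which the block-Gershgorin proof is valid.) -/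

import Mathlib

open Matrix


/-- The ℓ²-operator norm of a (rectangular) complex matrix: the operator norm of
the induced linear map between Euclidean spaces. -/
noncomputable def l2OpNorm {m n : Type*} [Fintype m] [Fintype n] [DecidableEq n]
    (M : Matrix m n ℂ) : ℝ :=
  ‖LinearMap.toContinuousLinearMap (Matrix.toEuclideanLin M)‖

private lemma mulVec_l2norm_le {p q : ℕ} (M : Matrix (Fin p) (Fin q) ℂ) (w : Fin q → ℂ) :
    ‖(WithLp.equiv 2 (Fin p → ℂ)).symm (M *ᵥ w)‖ ≤
      l2OpNorm M * ‖(WithLp.equiv 2 (Fin q → ℂ)).symm w‖ := by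
  have h := (LinearMap.toContinuousLinearMap (Matrix.toEuclideanLin M)).le_opNorm
      ((WithLp.equiv 2 (Fin q → ℂ)).symm w)
  simpa [l2OpNorm, Matrix.toEuclideanLin_apply_piLp_toLp, Matrix.toLin'_apply] using h

set_option maxHeartbeats 1000000 in
set_option synthInstance.maxHeartbeats 400000 in
/-- **Spectral-radius bound of Appendix D.**  For a block matrix
`K = fromBlocks 0 B C D` with zero upper-left block and normal `D`, letting
`ρD` be the maximum modulus of the eigenvalues of `D`, every eigenvalue `λ`
of `K` satisfies `|λ| ≤ ρD + √(‖B‖·‖C‖)` in the ℓ²-operator norm. -/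
theorem specRadius_fromBlocks_zero {n m : ℕ} (hn : 1 ≤ n) (hm : 1 ≤ m)
    (B : Matrix (Fin n) (Fin m) ℂ) (C : Matrix (Fin m) (Fin n) ℂ)
    (D : Matrix (Fin m) (Fin m) ℂ) (hD : IsStarNormal D)
    (ρD : ℝ) (hρD : IsGreatest ((fun z : ℂ => ‖z‖) '' spectrum ℂ D) ρD)
    (lam : ℂ)
    (hK : lam ∈ spectrum ℂ (Matrix.fromBlocks (0 : Matrix (Fin n) (Fin n) ℂ) B C D)) :
    ‖lam‖ ≤ ρD + Real.sqrt (l2OpNorm B * l2OpNorm C) := by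
  classical
  haveI : Nonempty (Fin m) := ⟨⟨0, hm⟩⟩
  by_contra hcon
  push_neg at hcon
  set a := ‖lam‖ with ha
  set bR := l2OpNorm B with hbR
  set cR := l2OpNorm C with hcR
  have hb0 : 0 ≤ bR := norm_nonneg _
  have hc0 : 0 ≤ cR := norm_nonneg _
  have hbc0 : 0 ≤ bR * cR := mul_nonneg hb0 hc0
  set s := Real.sqrt (bR * cR) with hs
  have hs0 : 0 ≤ s := Real.sqrt_nonneg _
  have hss : s * s = bR * cR := Real.mul_self_sqrt hbc0
  obtain ⟨μ0, hμ0, hμ0'⟩ := hρD.1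
  have hρ0 : 0 ≤ ρD := hμ0' ▸ (norm_nonneg μ0)
  set δ := a - ρD with hδdef
  have hδs : s < δ := by
    have := hcon; simp only [hδdef]; linarith
  have hδ0 : 0 < δ := lt_of_le_of_lt hs0 hδs
  -- lam is not in the spectrum of D
  have hlam_not : lam ∉ spectrum ℂ D := by
    intro h
    have : ‖lam‖ ≤ ρD := hρD.2 ⟨lam, h, rfl⟩
    simp only [← ha] at this
    linarith
  set Mlam : Matrix (Fin m) (Fin m) ℂ := algebraMap ℂ _ lam - D with hMlam
  have hUnit : IsUnit Mlam := spectrum.notMem_iff.mp hlam_not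
  -- Mlam is star-normal
  have hMnorm : Commute (star Mlam) Mlam := by
    rw [hMlam, star_sub, ← algebraMap_star_comm]
    exact (Algebra.commute_algebraMap_left _ _).sub_left
      ((Algebra.commute_algebraMap_right _ _).sub_right hD.star_comm_self)
  set T := Matrix.toEuclideanCLM (𝕜 := ℂ) Mlam with hT
  have hTnorm : star T * T = T * star T := by
    rw [hT, ← map_star, ← _root_.map_mul, ← _root_.map_mul]
    exact congrArg _ hMnorm.eq
  have hTU : IsUnit T := hUnit.map (Matrix.toEuclideanCLM (𝕜 := ℂ))
  obtain ⟨u, hu⟩ := hTU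
  have huNorm : star (↑u : EuclideanSpace ℂ (Fin m) →L[ℂ] EuclideanSpace ℂ (Fin m)) * ↑u
      = ↑u * star ↑u := by rw [hu]; exact hTnorm
  have huu : star u * u = u * star u := by
    apply Units.ext
    simpa [Units.val_mul, Units.coe_star] using huNorm
  have hinvNorm : IsStarNormal
      ((↑u⁻¹ : EuclideanSpace ℂ (Fin m) →L[ℂ] EuclideanSpace ℂ (Fin m))) := by
    constructor
    have key : (star u)⁻¹ * u⁻¹ = u⁻¹ * (star u)⁻¹ := by
      rw [← _root_.mul_inv_rev, ← _root_.mul_inv_rev, huu]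
    calc star (↑u⁻¹ : EuclideanSpace ℂ (Fin m) →L[ℂ] EuclideanSpace ℂ (Fin m)) * ↑u⁻¹
        = ↑((star u)⁻¹ * u⁻¹) := by rw [Units.val_mul, Units.coe_star_inv]
      _ = ↑(u⁻¹ * (star u)⁻¹) := by rw [key]
      _ = ↑u⁻¹ * star ↑u⁻¹ := by rw [Units.val_mul, Units.coe_star_inv]
  -- bound the spectrum of u⁻¹
  have hspec : ∀ z ∈ spectrum ℂ
      ((↑u⁻¹ : EuclideanSpace ℂ (Fin m) →L[ℂ] EuclideanSpace ℂ (Fin m))),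
      ‖z‖ ≤ δ⁻¹ := by
    intro z hz
    have hz0 : z ≠ 0 := by
      rintro rfl
      exact (spectrum.zero_mem_iff ℂ).mp hz (u⁻¹).isUnit
    have hz' : z⁻¹ ∈ spectrum ℂ
        ((↑u : EuclideanSpace ℂ (Fin m) →L[ℂ] EuclideanSpace ℂ (Fin m))) := by
      have h := (spectrum.inv_mem_iff (r := Units.mk0 z hz0) (a := u⁻¹)).mp (by simpa using hz)
      simpa using h
    rw [hu, hT, AlgEquiv.spectrum_eq] at hz'
    rw [hMlam, ← spectrum.singleton_sub_eq] at hz'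
    obtain ⟨w1, hw1, μ, hμ, heq⟩ := Set.mem_sub.mp hz'
    rw [Set.mem_singleton_iff] at hw1
    rw [hw1] at heq
    have hμρ : ‖μ‖ ≤ ρD := hρD.2 ⟨μ, hμ, rfl⟩
    have hlow : δ ≤ ‖z⁻¹‖ := by
      rw [← heq]
      have h2 := norm_sub_norm_le lam μ
      simp only [← ha] at h2
      linarith [h2]
    rw [norm_inv] at hlow
    have hzpos : 0 < ‖z‖ := by
      exact norm_pos_iff.mpr hz0
    rw [le_inv_comm₀ hδ0 hzpos] at hlow
    exact hlow
  -- the norm of u⁻¹ is at most δ⁻¹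
  have hinv_norm : ‖(↑u⁻¹ : EuclideanSpace ℂ (Fin m) →L[ℂ] EuclideanSpace ℂ (Fin m))‖ ≤ δ⁻¹ := by
    haveI := hinvNorm
    have h1 : spectralRadius ℂ (↑u⁻¹ : EuclideanSpace ℂ (Fin m) →L[ℂ] EuclideanSpace ℂ (Fin m))
        = ‖(↑u⁻¹ : EuclideanSpace ℂ (Fin m) →L[ℂ] EuclideanSpace ℂ (Fin m))‖₊ :=
      IsStarNormal.spectralRadius_eq_nnnorm _
    set c : NNReal := ⟨δ⁻¹, by positivity⟩ with hc
    have h2 : spectralRadius ℂ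
        (↑u⁻¹ : EuclideanSpace ℂ (Fin m) →L[ℂ] EuclideanSpace ℂ (Fin m)) ≤ (c : ENNReal) := by
      refine iSup₂_le fun z hz => ?_
      rw [ENNReal.coe_le_coe, ← NNReal.coe_le_coe, coe_nnnorm, hc]
      have : ‖z‖ ≤ δ⁻¹ := by exact hspec z hz
      exact this
    rw [h1, ENNReal.coe_le_coe, ← NNReal.coe_le_coe, coe_nnnorm, hc] at h2
    exact h2
  -- resolvent estimate
  have hres : ∀ w : Fin m → ℂ,
      δ * ‖(WithLp.equiv 2 (Fin m → ℂ)).symm w‖ ≤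
        ‖(WithLp.equiv 2 (Fin m → ℂ)).symm (Mlam *ᵥ w)‖ := by
    intro w
    set wE := (WithLp.equiv 2 (Fin m → ℂ)).symm w with hwE
    have h3 : T wE = (WithLp.equiv 2 (Fin m → ℂ)).symm (Mlam *ᵥ w) := by
      rw [hT, hwE, WithLp.equiv_symm_apply, Matrix.toEuclideanCLM_toLp]
    have h1 : (↑u⁻¹ : EuclideanSpace ℂ (Fin m) →L[ℂ] EuclideanSpace ℂ (Fin m)) (T wE) = wE := by
      rw [← hu, ← ContinuousLinearMap.comp_apply, ← ContinuousLinearMap.mul_def,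
        ← Units.val_mul, inv_mul_cancel]
      rfl
    have h2 : ‖wE‖ ≤ ‖(↑u⁻¹ : EuclideanSpace ℂ (Fin m) →L[ℂ] EuclideanSpace ℂ (Fin m))‖
        * ‖T wE‖ := by
      conv_lhs => rw [← h1]
      exact ContinuousLinearMap.le_opNorm _ _
    rw [h3] at h2
    have hTn : 0 ≤ ‖(WithLp.equiv 2 (Fin m → ℂ)).symm (Mlam *ᵥ w)‖ := norm_nonneg _
    have := mul_le_mul_of_nonneg_right hinv_norm hTn
    have h4 : ‖wE‖ ≤ δ⁻¹ * ‖(WithLp.equiv 2 (Fin m → ℂ)).symm (Mlam *ᵥ w)‖ := le_trans h2 this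
    have := mul_le_mul_of_nonneg_left h4 (le_of_lt hδ0)
    calc δ * ‖wE‖ ≤ δ * (δ⁻¹ * ‖(WithLp.equiv 2 (Fin m → ℂ)).symm (Mlam *ᵥ w)‖) := this
      _ = ‖(WithLp.equiv 2 (Fin m → ℂ)).symm (Mlam *ᵥ w)‖ := by
          field_simp
  -- eigenvector of the block matrix
  have hKnot : ¬ IsUnit (algebraMap ℂ _ lam - Matrix.fromBlocks 0 B C D) :=
    spectrum.mem_iff.mp hK
  rw [Matrix.isUnit_iff_isUnit_det, isUnit_iff_ne_zero, not_not] at hKnot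
  obtain ⟨v, hv0, hv⟩ := (Matrix.exists_mulVec_eq_zero_iff).mpr hKnot
  have hKv : Matrix.fromBlocks (0 : Matrix (Fin n) (Fin n) ℂ) B C D *ᵥ v = lam • v := by
    rw [Matrix.sub_mulVec, sub_eq_zero] at hv
    rw [← hv, Algebra.algebraMap_eq_smul_one, Matrix.smul_mulVec, Matrix.one_mulVec]
  set x : Fin n → ℂ := fun i => v (Sum.inl i) with hx
  set y : Fin m → ℂ := fun j => v (Sum.inr j) with hy
  have hvxy : v = Sum.elim x y := by funext i; cases i <;> rfl
  rw [hvxy, Matrix.fromBlocks_mulVec] at hKv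
  simp only [Sum.elim_comp_inl, Sum.elim_comp_inr] at hKv
  have hB : B *ᵥ y = lam • x := by
    funext i
    have h := congrFun hKv (Sum.inl i)
    simpa [Matrix.zero_mulVec] using h
  have hC : Mlam *ᵥ y = C *ᵥ x := by
    funext j
    have h := congrFun hKv (Sum.inr j)
    simp only [Sum.elim_inr, Pi.add_apply, Pi.smul_apply, smul_eq_mul] at h
    rw [hMlam, Matrix.sub_mulVec, Algebra.algebraMap_eq_smul_one, Matrix.smul_mulVec,
      Matrix.one_mulVec]
    simp only [Pi.sub_apply, Pi.smul_apply, smul_eq_mul]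
    linear_combination -h
  set xE := (WithLp.equiv 2 (Fin n → ℂ)).symm x with hxE
  set yE := (WithLp.equiv 2 (Fin m → ℂ)).symm y with hyE
  have hxineq : a * ‖xE‖ ≤ bR * ‖yE‖ := by
    have h := mulVec_l2norm_le B y
    rw [hB, WithLp.equiv_symm_apply, WithLp.toLp_smul, norm_smul] at h
    simp only [← ha, ← hbR] at h; exact h
  have hyineq : δ * ‖yE‖ ≤ cR * ‖xE‖ := by
    calc δ * ‖yE‖ ≤ ‖(WithLp.equiv 2 (Fin m → ℂ)).symm (Mlam *ᵥ y)‖ := hres y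
      _ = ‖(WithLp.equiv 2 (Fin m → ℂ)).symm (C *ᵥ x)‖ := by rw [hC]
      _ ≤ cR * ‖xE‖ := mulVec_l2norm_le C x
  have hx0 : x ≠ 0 := by
    intro h
    have hxE0 : xE = 0 := by rw [hxE, h, WithLp.equiv_symm_apply, WithLp.toLp_zero]
    have hyE0 : ‖yE‖ ≤ 0 := by
      rw [hxE0] at hyineq
      simp only [norm_zero, mul_zero] at hyineq
      nlinarith
    have : yE = 0 := by
      have := le_antisymm hyE0 (norm_nonneg _)
      rwa [norm_eq_zero] at this
    have hy0 : y = 0 := by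
      have := congrArg (WithLp.equiv 2 (Fin m → ℂ)) this
      exact this
    apply hv0
    rw [hvxy, h, hy0]
    funext i; cases i <;> rfl
  have hxEpos : 0 < ‖xE‖ := by
    rw [norm_pos_iff]
    intro h
    apply hx0
    have := congrArg (WithLp.equiv 2 (Fin n → ℂ)) h
    exact this
  have h4 : a * δ * ‖xE‖ ≤ bR * cR * ‖xE‖ := by
    nlinarith [mul_le_mul_of_nonneg_left hyineq hb0,
      mul_le_mul_of_nonneg_right hxineq (le_of_lt hδ0)]
  have h5 : a * δ ≤ bR * cR := le_of_mul_le_mul_right (by linarith) hxEpos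
  nlinarith [h5, hss, hδs, hρ0, hs0]
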